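/- For real x, t, the real parts of both L₁ and L₂ in the second-order rogue wave grow like 8x⁶ for fixed t as x → ±∞; consequently |L₂(x,t)|/|L₁(x,t)| → 1 as x → ±∞ for each fixed t, i.e., |q₂(x,t)| → 1 as x → ±∞. -/

import Mathlib

open Complex

noncomputable def L1second (x t : ℝ) : ℂ :=
  ((9 + 90*x^2 - 12*x^4 + 666*t^2 + 180*t^4 + 8*x^6 + 8*t^6 - 216*x^2*t^2 - 72*x*t
      + 24*x^4*t^2 + 48*x^3*t + 48*x*t^3 + 24*x^2*t^4 : ℝ) : ℂ)
  + Complex.I * ((-54*x + 24*t*x^4 + 288*t^2*x - 24*t^4*x - 24*x^5 - 48*x^3 + 198*t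
      + 24*t^5 + 48*t^3*x^2 + 336*t^3 : ℝ) : ℂ)

noncomputable def L2second (x t : ℝ) : ℂ :=
  ((45 - 198*x^2 - 60*x^4 - 486*t^2 - 60*t^4 + 8*x^6 + 8*t^6 - 504*x^2*t^2 + 504*x*t
      + 24*x^4*t^2 - 144*x^3*t - 144*x*t^3 + 24*x^2*t^4 : ℝ) : ℂ)
  + Complex.I * ((-48*x^3 + 528*t^3 + 72*t^5 - 414*t + 72*t*x^4 + 144*t^3*x^2 + 24*t^4*x
      + 48*t^2*x^3 - 576*t^2*x - 288*x^2*t - 90*x + 24*x^5 : ℝ) : ℂ)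

/-- The second-order rogue wave of the DNLS equation (with `a = c = 1`). -/
noncomputable def q2second (x t : ℝ) : ℂ :=
  (starRingEnd ℂ) (L1second x t) * L2second x t / (L1second x t) ^ 2
    * Complex.exp (Complex.I * (x : ℂ))

open Filter Topology

set_option maxHeartbeats 1000000

noncomputable def g1aux (t : ℝ) (u : ℂ) : ℂ :=
  8 + 9*u^6 + 90*u^4 - 12*u^2 + 666*t^2*u^6 + 180*t^4*u^6 + 8*t^6*u^6
    - 216*t^2*u^4 - 72*t*u^5 + 24*t^2*u^2 + 48*t*u^3 + 48*t^3*u^5 + 24*t^4*u^4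
  + Complex.I * (-54*u^5 + 24*t*u^2 + 288*t^2*u^5 - 24*t^4*u^5 - 24*u - 48*u^3
      + 198*t*u^6 + 24*t^5*u^6 + 48*t^3*u^4 + 336*t^3*u^6)

noncomputable def g2aux (t : ℝ) (u : ℂ) : ℂ :=
  8 + 45*u^6 - 198*u^4 - 60*u^2 - 486*t^2*u^6 - 60*t^4*u^6 + 8*t^6*u^6
    - 504*t^2*u^4 + 504*t*u^5 + 24*t^2*u^2 - 144*t*u^3 - 144*t^3*u^5 + 24*t^4*u^4
  + Complex.I * (-48*u^3 + 528*t^3*u^6 + 72*t^5*u^6 - 414*t*u^6 + 72*t*u^2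
      + 144*t^3*u^4 + 24*t^4*u^5 + 48*t^2*u^3 - 576*t^2*u^5 - 288*t*u^4 - 90*u^5 + 24*u)

lemma g1aux_eq (t x : ℝ) (hx : x ≠ 0) :
    L1second x t * ((x : ℂ)⁻¹) ^ 6 = g1aux t (x : ℂ)⁻¹ := by
  have hx' : (x : ℂ) ≠ 0 := Complex.ofReal_ne_zero.mpr hx
  have h : (x : ℂ) * ((x : ℂ))⁻¹ = 1 := mul_inv_cancel₀ hx'
  unfold L1second g1aux
  push_cast
  linear_combination (((-72*(t:ℂ)+48*(t:ℂ)^3) + Complex.I*(-54+288*(t:ℂ)^2-24*(t:ℂ)^4)) * ((x:ℂ)⁻¹)^5 * (1)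
      + ((90-216*(t:ℂ)^2+24*(t:ℂ)^4) + Complex.I*(48*(t:ℂ)^3)) * ((x:ℂ)⁻¹)^4 * (1+((x:ℂ)*((x:ℂ))⁻¹)^1)
      + (48*(t:ℂ) - 48*Complex.I) * ((x:ℂ)⁻¹)^3 * (1+((x:ℂ)*((x:ℂ))⁻¹)^1+((x:ℂ)*((x:ℂ))⁻¹)^2)
      + ((-12+24*(t:ℂ)^2) + Complex.I*(24*(t:ℂ))) * ((x:ℂ)⁻¹)^2 * (1+((x:ℂ)*((x:ℂ))⁻¹)^1+((x:ℂ)*((x:ℂ))⁻¹)^2+((x:ℂ)*((x:ℂ))⁻¹)^3)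
      + (-24*Complex.I) * ((x:ℂ)⁻¹) * (1+((x:ℂ)*((x:ℂ))⁻¹)^1+((x:ℂ)*((x:ℂ))⁻¹)^2+((x:ℂ)*((x:ℂ))⁻¹)^3+((x:ℂ)*((x:ℂ))⁻¹)^4)
      + 8 * (1+((x:ℂ)*((x:ℂ))⁻¹)^1+((x:ℂ)*((x:ℂ))⁻¹)^2+((x:ℂ)*((x:ℂ))⁻¹)^3+((x:ℂ)*((x:ℂ))⁻¹)^4+((x:ℂ)*((x:ℂ))⁻¹)^5)) * h

lemma g2aux_eq (t x : ℝ) (hx : x ≠ 0) :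
    L2second x t * ((x : ℂ)⁻¹) ^ 6 = g2aux t (x : ℂ)⁻¹ := by
  have hx' : (x : ℂ) ≠ 0 := Complex.ofReal_ne_zero.mpr hx
  have h : (x : ℂ) * ((x : ℂ))⁻¹ = 1 := mul_inv_cancel₀ hx'
  unfold L2second g2aux
  push_cast
  linear_combination (((504*(t:ℂ)-144*(t:ℂ)^3) + Complex.I*(24*(t:ℂ)^4-576*(t:ℂ)^2-90)) * ((x:ℂ)⁻¹)^5 * (1)
      + ((-198-504*(t:ℂ)^2+24*(t:ℂ)^4) + Complex.I*(144*(t:ℂ)^3-288*(t:ℂ))) * ((x:ℂ)⁻¹)^4 * (1+((x:ℂ)*((x:ℂ))⁻¹)^1)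
      + ((-144*(t:ℂ)) + Complex.I*(-48+48*(t:ℂ)^2)) * ((x:ℂ)⁻¹)^3 * (1+((x:ℂ)*((x:ℂ))⁻¹)^1+((x:ℂ)*((x:ℂ))⁻¹)^2)
      + ((-60+24*(t:ℂ)^2) + Complex.I*(72*(t:ℂ))) * ((x:ℂ)⁻¹)^2 * (1+((x:ℂ)*((x:ℂ))⁻¹)^1+((x:ℂ)*((x:ℂ))⁻¹)^2+((x:ℂ)*((x:ℂ))⁻¹)^3)
      + (24*Complex.I) * ((x:ℂ)⁻¹) * (1+((x:ℂ)*((x:ℂ))⁻¹)^1+((x:ℂ)*((x:ℂ))⁻¹)^2+((x:ℂ)*((x:ℂ))⁻¹)^3+((x:ℂ)*((x:ℂ))⁻¹)^4)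
      + 8 * (1+((x:ℂ)*((x:ℂ))⁻¹)^1+((x:ℂ)*((x:ℂ))⁻¹)^2+((x:ℂ)*((x:ℂ))⁻¹)^3+((x:ℂ)*((x:ℂ))⁻¹)^4+((x:ℂ)*((x:ℂ))⁻¹)^5)) * h

lemma ratio_lim (hL : ∀ x t : ℝ, L1second x t ≠ 0) (t : ℝ) {l : Filter ℝ}
    (h0 : ∀ᶠ x in l, x ≠ 0)
    (hinv : Tendsto (fun x : ℝ => ((x : ℂ))⁻¹) l (𝓝 0)) :
    Tendsto (fun x => ‖L2second x t‖ / ‖L1second x t‖) l (𝓝 1) := by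
  have hc1 : Continuous (g1aux t) := by unfold g1aux; fun_prop
  have hc2 : Continuous (g2aux t) := by unfold g2aux; fun_prop
  have h10 : g1aux t 0 = 8 := by simp [g1aux]
  have h20 : g2aux t 0 = 8 := by simp [g2aux]
  have hT1 : Tendsto (fun x : ℝ => L1second x t * ((x : ℂ)⁻¹) ^ 6) l (𝓝 8) := by
    have h := (hc1.tendsto 0).comp hinv
    rw [h10] at h
    refine h.congr' ?_
    filter_upwards [h0] with x hx
    exact (g1aux_eq t x hx).symm
  have hT2 : Tendsto (fun x : ℝ => L2second x t * ((x : ℂ)⁻¹) ^ 6) l (𝓝 8) := by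
    have h := (hc2.tendsto 0).comp hinv
    rw [h20] at h
    refine h.congr' ?_
    filter_upwards [h0] with x hx
    exact (g2aux_eq t x hx).symm
  have hA : Tendsto (fun x : ℝ => ‖L1second x t * ((x : ℂ)⁻¹) ^ 6‖)
      l (𝓝 ‖(8 : ℂ)‖) := (continuous_norm.tendsto (8 : ℂ)).comp hT1
  have hB : Tendsto (fun x : ℝ => ‖L2second x t * ((x : ℂ)⁻¹) ^ 6‖)
      l (𝓝 ‖(8 : ℂ)‖) := (continuous_norm.tendsto (8 : ℂ)).comp hT2
  have habs8 : ‖(8 : ℂ)‖ ≠ 0 := by norm_num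
  have hdiv := hB.div hA habs8
  have h88 : ‖(8 : ℂ)‖ / ‖(8 : ℂ)‖ = 1 := div_self habs8
  rw [h88] at hdiv
  refine hdiv.congr' ?_
  filter_upwards [h0] with x hx
  have hu : ‖((x : ℂ)⁻¹) ^ 6‖ ≠ 0 := by
    have h1 : ((x : ℂ)⁻¹) ^ 6 ≠ 0 :=
      pow_ne_zero _ (inv_ne_zero (Complex.ofReal_ne_zero.mpr hx))
    simpa using h1
  show ‖L2second x t * ((x : ℂ)⁻¹) ^ 6‖
      / ‖L1second x t * ((x : ℂ)⁻¹) ^ 6‖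
      = ‖L2second x t‖ / ‖L1second x t‖
  rw [norm_mul, norm_mul, mul_div_mul_right _ _ hu]

lemma inv_cast_atTop : Tendsto (fun x : ℝ => ((x : ℂ))⁻¹) atTop (𝓝 0) := by
  have h := (Complex.continuous_ofReal.tendsto 0).comp tendsto_inv_atTop_zero
  simpa [Function.comp_def, Complex.ofReal_inv] using h

lemma real_inv_atBot : Tendsto (fun x : ℝ => x⁻¹) atBot (𝓝 0) := by
  have h := (tendsto_inv_atTop_zero.comp
    (tendsto_neg_atBot_atTop : Tendsto (fun x : ℝ => -x) atBot atTop)).neg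
  simpa [Function.comp_def, inv_neg] using h

lemma inv_cast_atBot : Tendsto (fun x : ℝ => ((x : ℂ))⁻¹) atBot (𝓝 0) := by
  have h := (Complex.continuous_ofReal.tendsto 0).comp real_inv_atBot
  simpa [Function.comp_def, Complex.ofReal_inv] using h

/-- For each fixed `t`, `|L₂(x,t)|/|L₁(x,t)| → 1` as `x → ±∞`; consequently
`|q₂(x,t)| → 1` as `x → ±∞` (assuming `L₁` never vanishes on `ℝ²`). -/
theorem second_order_rogue_wave_asymptotics
    (hL : ∀ x t : ℝ, L1second x t ≠ 0) :
    ∀ t : ℝ,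
      Tendsto (fun x => ‖L2second x t‖ / ‖L1second x t‖) atTop (𝓝 1) ∧
      Tendsto (fun x => ‖L2second x t‖ / ‖L1second x t‖) atBot (𝓝 1) ∧
      Tendsto (fun x => ‖q2second x t‖) atTop (𝓝 1) ∧
      Tendsto (fun x => ‖q2second x t‖) atBot (𝓝 1) := by
  intro t
  have hq : ∀ x : ℝ, ‖q2second x t‖
      = ‖L2second x t‖ / ‖L1second x t‖ := by
    intro x
    have hne : ‖L1second x t‖ ≠ 0 := by
      simpa using hL x t
    unfold q2second
    rw [norm_mul, norm_div, norm_mul, norm_pow, Complex.norm_conj]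
    have hexp : ‖Complex.exp (Complex.I * (x : ℂ))‖ = 1 := by
      rw [Complex.norm_exp]
      simp
    rw [hexp, mul_one]
    field_simp
  have hfun : (fun x : ℝ => ‖q2second x t‖)
      = fun x => ‖L2second x t‖ / ‖L1second x t‖ := funext hq
  have hTop := ratio_lim hL t (eventually_ne_atTop 0) inv_cast_atTop
  have hBot := ratio_lim hL t (eventually_ne_atBot 0) inv_cast_atBot
  exact ⟨hTop, hBot, by rw [hfun]; exact hTop, by rw [hfun]; exact hBot⟩
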